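/- (Orderability Characterization) A directed multigraph D is orderable under pebble distribution p if and only if (1) every vertex has nonnegative balance, and (2) every nontrivial sink component of the component digraph of D contains a vertex with balance at least one. -/

import Mathlib

variable {V : Type*} [DecidableEq V]

/-- Result of a pebbling move `u → v`: remove two pebbles from `u`, add one to `v`. -/
def applyMove (p : V → ℕ) (u v : V) (x : V) : ℕ :=
  (if x = u then p x - 2 else p x) + (if x = v then 1 else 0)

/-- A list of moves is a valid sequence of pebbling moves from `p` in `G`. -/
def IsValidSeq (G : SimpleGraph V) : (V → ℕ) → List (V × V) → Prop
  | _, [] => True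
  | p, m :: rest => G.Adj m.1 m.2 ∧ 2 ≤ p m.1 ∧ IsValidSeq G (applyMove p m.1 m.2) rest

/-- The distribution after executing a sequence of pebbling moves. -/
def applySeq (p : V → ℕ) : List (V × V) → V → ℕ
  | [] => p
  | m :: rest => applySeq (applyMove p m.1 m.2) rest

/-- Indegree of a vertex in a directed multigraph (multiset of directed edges). -/
def indeg (D : Multiset (V × V)) (v : V) : ℕ :=
  Multiset.card (D.filter fun e => e.2 = v)

/-- Outdegree of a vertex in a directed multigraph. -/
def outdeg (D : Multiset (V × V)) (v : V) : ℕ :=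
  Multiset.card (D.filter fun e => e.1 = v)

/-- balance(D,p,v) = p(v) + indeg_D(v) - 2·outdeg_D(v). -/
def balance (D : Multiset (V × V)) (p : V → ℕ) (v : V) : ℤ :=
  (p v : ℤ) + (indeg D v : ℤ) - 2 * (outdeg D v : ℤ)

/-- `D` is orderable under `p`: some ordering of the edge multiset of `D`
is a valid sequence of pebbling moves. -/
def Orderable (G : SimpleGraph V) (D : Multiset (V × V)) (p : V → ℕ) : Prop :=
  ∃ σ : List (V × V), (σ : Multiset (V × V)) = D ∧ IsValidSeq G p σ

/-- A directed multigraph is acyclic if its edge relation admits no directed cycle. -/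
def DAcyclic (D : Multiset (V × V)) : Prop :=
  ∀ v : V, ¬ Relation.TransGen (fun a b => (a, b) ∈ D) v v

/-- The strongly connected component of `a` in the directed multigraph `D`. -/
def SCC (D : Multiset (V × V)) (a : V) : Set V :=
  {b | Relation.ReflTransGen (fun x y => (x, y) ∈ D) a b ∧
       Relation.ReflTransGen (fun x y => (x, y) ∈ D) b a}


lemma indeg_cons (m : V × V) (D : Multiset (V × V)) (w : V) :
    indeg (m ::ₘ D) w = (if m.2 = w then 1 else 0) + indeg D w := by
  unfold indeg
  rw [Multiset.filter_cons]
  split_ifs <;> simp <;> omega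

lemma outdeg_cons (m : V × V) (D : Multiset (V × V)) (w : V) :
    outdeg (m ::ₘ D) w = (if m.1 = w then 1 else 0) + outdeg D w := by
  unfold outdeg
  rw [Multiset.filter_cons]
  split_ifs <;> simp <;> omega

lemma applySeq_append (p : V → ℕ) (l₁ l₂ : List (V × V)) :
    applySeq p (l₁ ++ l₂) = applySeq (applySeq p l₁) l₂ := by
  induction l₁ generalizing p with
  | nil => rfl
  | cons m rest ih => simp [applySeq, ih]

lemma final_eq_balance (G : SimpleGraph V) :
    ∀ (σ : List (V × V)) (p : V → ℕ), IsValidSeq G p σ →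
      ∀ w, (applySeq p σ w : ℤ) = balance (↑σ) p w := by
  intro σ
  induction σ with
  | nil => intro p _ w; simp [applySeq, balance, indeg, outdeg]
  | cons m rest ih =>
    intro p hv w
    obtain ⟨hadj, hp, hrest⟩ := hv
    have h1 : (applySeq p (m :: rest) w : ℤ) = balance (↑rest) (applyMove p m.1 m.2) w :=
      ih (applyMove p m.1 m.2) hrest w
    rw [show ((m :: rest : List (V × V)) : Multiset (V × V)) = m ::ₘ (↑rest) from rfl]
    rw [h1]
    unfold balance
    rw [indeg_cons, outdeg_cons]
    unfold applyMove
    have hne : m.1 ≠ m.2 := G.ne_of_adj hadj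
    by_cases h1 : w = m.1 <;> by_cases h2 : w = m.2 <;>
      simp only [h1, h2, if_pos, if_neg, eq_comm] <;> simp_all <;> push_cast <;> omega

lemma applySeq_mono (x : V) :
    ∀ (τ : List (V × V)) (q : V → ℕ), (∀ e ∈ τ, e.1 ≠ x) → q x ≤ applySeq q τ x := by
  intro τ
  induction τ with
  | nil => intro q _; exact le_refl _
  | cons m rest ih =>
    intro q h
    have h1 : q x ≤ applyMove q m.1 m.2 x := by
      unfold applyMove
      have : ¬ (x = m.1) := fun hc => h m (by simp) hc.symm
      simp [this]
    exact le_trans h1 (ih _ (fun e he => h e (by simp [he])))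

lemma valid_append_single (G : SimpleGraph V) {u v : V} :
    ∀ (σ : List (V × V)) (p : V → ℕ), IsValidSeq G p σ → G.Adj u v →
      2 ≤ applySeq p σ u → IsValidSeq G p (σ ++ [(u, v)]) := by
  intro σ
  induction σ with
  | nil => intro p _ hadj hp; exact ⟨hadj, hp, trivial⟩
  | cons m rest ih =>
    intro p hv hadj hp
    obtain ⟨h1, h2, h3⟩ := hv
    exact ⟨h1, h2, ih _ h3 hadj hp⟩

lemma mem_scc_self (D : Multiset (V × V)) (a : V) : a ∈ SCC D a :=
  ⟨Relation.ReflTransGen.refl, Relation.ReflTransGen.refl⟩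

lemma closed_of_reach {D : Multiset (V × V)} {T : Set V}
    (hcl : ∀ e ∈ D, e.1 ∈ T → e.2 ∈ T) {a b : V} (ha : a ∈ T)
    (h : Relation.ReflTransGen (fun x y => (x, y) ∈ D) a b) : b ∈ T := by
  induction h with
  | refl => exact ha
  | tail _ hedge ih => exact hcl _ hedge ih

lemma scc_eq_of_mem {D : Multiset (V × V)} {a b : V} (h : b ∈ SCC D a) :
    SCC D a = SCC D b := by
  obtain ⟨h1, h2⟩ := h
  ext c
  exact ⟨fun ⟨g1, g2⟩ => ⟨h2.trans g1, g2.trans h1⟩,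
         fun ⟨g1, g2⟩ => ⟨h1.trans g1, g2.trans h2⟩⟩

lemma exists_pos_final (G : SimpleGraph V) (T : Set V) :
    ∀ (σ : List (V × V)) (p : V → ℕ), IsValidSeq G p σ →
      (∀ e ∈ σ, e.1 ∈ T → e.2 ∈ T) → (∃ e ∈ σ, e.2 ∈ T) →
      ∃ w ∈ T, 1 ≤ applySeq p σ w := by
  intro σ
  induction σ with
  | nil => intro p _ _ h; simp at h
  | cons m rest ih =>
    intro p hv hcl hex
    obtain ⟨hadj, hp, hrest⟩ := hv
    by_cases hr : ∃ e ∈ rest, e.2 ∈ T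
    · obtain ⟨w, hw, h1⟩ := ih _ hrest (fun e he => hcl e (by simp [he])) hr
      exact ⟨w, hw, h1⟩
    · have hm : m.2 ∈ T := by
        obtain ⟨e, he, he2⟩ := hex
        rcases List.mem_cons.mp he with rfl | he'
        · exact he2
        · exact absurd ⟨e, he', he2⟩ hr
      refine ⟨m.2, hm, ?_⟩
      show 1 ≤ applySeq (applyMove p m.1 m.2) rest m.2
      have h1 : 1 ≤ applyMove p m.1 m.2 m.2 := by unfold applyMove; simp
      refine le_trans h1 (applySeq_mono _ rest _ ?_)
      intro e he hc
      exact hr ⟨e, he, hcl e (by simp [he]) (hc ▸ hm)⟩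

lemma balance_erase (D : Multiset (V × V)) (p : V → ℕ) {e : V × V} (he : e ∈ D) (w : V) :
    balance (D.erase e) p w
      = balance D p w + (if e.1 = w then 2 else 0) - (if e.2 = w then 1 else 0) := by
  conv_rhs => rw [← Multiset.cons_erase he]
  unfold balance
  rw [indeg_cons, outdeg_cons]
  split_ifs <;> push_cast <;> ring

lemma reverse_dir (G : SimpleGraph V) :
    ∀ (n : ℕ) (D : Multiset (V × V)) (p : V → ℕ), Multiset.card D = n →
      (∀ e ∈ D, G.Adj e.1 e.2) →
      (∀ v, 0 ≤ balance D p v) →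
      (∀ a : V, (∀ e ∈ D, e.1 ∈ SCC D a → e.2 ∈ SCC D a) →
        (∃ e ∈ D, e.1 ∈ SCC D a ∨ e.2 ∈ SCC D a) →
        ∃ v ∈ SCC D a, 1 ≤ balance D p v) →
      Orderable G D p := by
  intro n
  induction n with
  | zero =>
    intro D p hcard _ _ _
    refine ⟨[], ?_, trivial⟩
    simpa using (Multiset.card_eq_zero.mp hcard).symm
  | succ n ih =>
    intro D p hcard hG h1 h2
    classical
    have hDne : D ≠ 0 := by intro h; simp [h] at hcard
    set R : V → V → Prop := fun x y => Relation.ReflTransGen (fun c d => (c, d) ∈ D) x y with hR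
    set T : Finset V := D.toFinset.image Prod.snd with hT
    have hTne : T.Nonempty := by
      obtain ⟨e, he⟩ := Multiset.exists_mem_of_ne_zero hDne
      exact ⟨e.2, Finset.mem_image.mpr ⟨e, Multiset.mem_toFinset.mpr he, rfl⟩⟩
    obtain ⟨a, haT, hamin⟩ := Finset.exists_min_image T
      (fun x => (T.filter (fun b => R x b)).card) hTne
    have hmax : ∀ b ∈ T, R a b → R b a := by
      intro b hb hab
      have hsub : T.filter (fun c => R b c) ⊆ T.filter (fun c => R a c) := by
        intro c hc
        rw [Finset.mem_filter] at hc ⊢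
        exact ⟨hc.1, hab.trans hc.2⟩
      have hcard' : (T.filter (fun c => R a c)).card ≤ (T.filter (fun c => R b c)).card :=
        hamin b hb
      have heq := Finset.eq_of_subset_of_card_le hsub hcard'
      have haa : a ∈ T.filter (fun c => R a c) :=
        Finset.mem_filter.mpr ⟨haT, Relation.ReflTransGen.refl⟩
      rw [← heq] at haa
      exact (Finset.mem_filter.mp haa).2
    have hclosed : ∀ e ∈ D, e.1 ∈ SCC D a → e.2 ∈ SCC D a := by
      intro e he h1'
      have hedge : ((fun c d => (c, d) ∈ D) e.1 e.2) := by simpa using he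
      have hae2 : R a e.2 := h1'.1.tail hedge
      have he2T : e.2 ∈ T := Finset.mem_image.mpr ⟨e, Multiset.mem_toFinset.mpr he, rfl⟩
      exact ⟨hae2, hmax e.2 he2T hae2⟩
    have hnt : ∃ e ∈ D, e.1 ∈ SCC D a ∨ e.2 ∈ SCC D a := by
      obtain ⟨e, heT, he2⟩ := Finset.mem_image.mp haT
      exact ⟨e, Multiset.mem_toFinset.mp heT, Or.inr (he2 ▸ mem_scc_self D a)⟩
    obtain ⟨v, hvS, hbv⟩ := h2 a hclosed hnt
    obtain ⟨u, huvD, hchoice⟩ :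
        ∃ u, (u, v) ∈ D ∧ (u ∈ SCC D a ∨ ∀ x ∈ SCC D a, x = v) := by
      by_cases hcase : ∃ u, u ∈ SCC D a ∧ (u, v) ∈ D
      · obtain ⟨u, hu1, hu2⟩ := hcase; exact ⟨u, hu2, Or.inl hu1⟩
      · have hSv : ∀ x ∈ SCC D a, x = v := by
          intro x hx
          by_contra hxv
          have hSa : SCC D a = SCC D v := scc_eq_of_mem hvS
          have hxv' : Relation.ReflTransGen (fun c d => (c, d) ∈ D) x v :=
            (show x ∈ SCC D v from hSa ▸ hx).2
          rcases Relation.ReflTransGen.cases_tail hxv' with h | ⟨y, hxy, hyv⟩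
          · exact hxv h.symm
          · have hay : R a y := (hx.1).trans hxy
            have hya : R y a := (Relation.ReflTransGen.single hyv).trans hvS.2
            exact hcase ⟨y, ⟨hay, hya⟩, hyv⟩
        obtain ⟨e, heD, hor⟩ := hnt
        have he2 : e.2 = v := hSv _ (hor.elim (fun h => hclosed e heD h) id)
        refine ⟨e.1, ?_, Or.inr hSv⟩
        rw [← he2]
        simpa using heD
    have hadj_uv : G.Adj u v := hG _ huvD
    have hune : u ≠ v := G.ne_of_adj hadj_uv
    set D' : Multiset (V × V) := D.erase (u, v) with hD'
    have hD'card : Multiset.card D' = n := by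
      rw [hD', Multiset.card_erase_of_mem huvD, hcard]
      rfl
    have hbal : ∀ w, balance D' p w
        = balance D p w + (if u = w then 2 else 0) - (if v = w then 1 else 0) :=
      fun w => balance_erase D p huvD w
    have hG' : ∀ e ∈ D', G.Adj e.1 e.2 := fun e he => hG e (Multiset.mem_of_mem_erase he)
    have h1' : ∀ w, 0 ≤ balance D' p w := by
      intro w
      rw [hbal w]
      have h0 := h1 w
      by_cases hw2 : v = w
      · subst hw2
        rw [if_neg hune]
        split_ifs <;> omega
      · rw [if_neg hw2]
        split_ifs <;> omega
    have h2' : ∀ b : V, (∀ e ∈ D', e.1 ∈ SCC D' b → e.2 ∈ SCC D' b) →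
        (∃ e ∈ D', e.1 ∈ SCC D' b ∨ e.2 ∈ SCC D' b) →
        ∃ w ∈ SCC D' b, 1 ≤ balance D' p w := by
      intro b hcl' hnt'
      by_cases huS : u ∈ SCC D' b
      · refine ⟨u, huS, ?_⟩
        rw [hbal u, if_pos rfl, if_neg (fun h => hune h.symm)]
        have := h1 u
        omega
      · -- u ∉ SCC D' b
        have hclD : ∀ e ∈ D, e.1 ∈ SCC D' b → e.2 ∈ SCC D' b := by
          intro e heD h1e
          have hene : e ≠ (u, v) := by
            intro h; rw [h] at h1e; exact huS h1e
          exact hcl' e ((Multiset.mem_erase_of_ne hene).mpr heD) h1e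
        have hSeq : SCC D b = SCC D' b := by
          apply Set.Subset.antisymm
          · intro c hc
            exact closed_of_reach hclD (mem_scc_self D' b) hc.1
          · intro c hc
            exact ⟨Relation.ReflTransGen.mono (fun x y h => Multiset.mem_of_mem_erase h) _ _ hc.1,
                   Relation.ReflTransGen.mono (fun x y h => Multiset.mem_of_mem_erase h) _ _ hc.2⟩
        have hclDb : ∀ e ∈ D, e.1 ∈ SCC D b → e.2 ∈ SCC D b := by
          rw [hSeq]; exact hclD
        have hntb : ∃ e ∈ D, e.1 ∈ SCC D b ∨ e.2 ∈ SCC D b := by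
          obtain ⟨e, he, hor⟩ := hnt'
          exact ⟨e, Multiset.mem_of_mem_erase he, by rw [hSeq]; exact hor⟩
        obtain ⟨w, hwS, hbw⟩ := h2 b hclDb hntb
        by_cases hwv : w = v
        · subst hwv
          have e1 : SCC D b = SCC D w := scc_eq_of_mem hwS
          have e2 : SCC D a = SCC D w := scc_eq_of_mem hvS
          rcases hchoice with hu | hSv
          · exfalso
            apply huS
            rw [← hSeq, e1, ← e2]
            exact hu
          · have hxv : ∀ x ∈ SCC D' b, x = w := by
              intro x hx
              apply hSv
              rw [e2, ← e1, hSeq]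
              exact hx
            have hwS' : w ∈ SCC D' b := by
              rw [← hSeq, e1]; exact mem_scc_self _ _
            have hout : outdeg D' w = 0 := by
              rw [outdeg, Multiset.card_eq_zero, Multiset.filter_eq_nil]
              intro e he h1e
              have h2e : e.2 ∈ SCC D' b := hcl' e he (by rw [h1e]; exact hwS')
              have he2w : e.2 = w := hxv _ h2e
              exact G.ne_of_adj (hG' e he) (by rw [h1e, he2w])
            have hin : 1 ≤ indeg D' w := by
              obtain ⟨e, he, hor⟩ := hnt'
              have he2 : e.2 = w := hxv _ (hor.elim (fun h => hcl' e he h) id)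
              rw [indeg]
              exact Multiset.card_pos_iff_exists_mem.mpr ⟨e, Multiset.mem_filter.mpr ⟨he, he2⟩⟩
            refine ⟨w, hwS', ?_⟩
            unfold balance
            rw [hout]
            omega
        · have hwu : w ≠ u := by
            intro h
            rw [hSeq] at hwS
            exact huS (h ▸ hwS)
          refine ⟨w, by rw [← hSeq]; exact hwS, ?_⟩
          rw [hbal w, if_neg (fun h => hwu h.symm), if_neg (fun h => hwv h.symm)]
          omega
    obtain ⟨σ', hσ'eq, hσ'val⟩ := ih D' p hD'card hG' h1' h2'
    refine ⟨σ' ++ [(u, v)], ?_, ?_⟩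
    · have hcoe : ((σ' ++ [(u, v)] : List (V × V)) : Multiset (V × V))
          = (u, v) ::ₘ (↑σ' : Multiset (V × V)) := by
        rw [← Multiset.coe_add, add_comm]; rfl
      rw [hcoe, hσ'eq]
      exact Multiset.cons_erase huvD
    · apply valid_append_single G σ' p hσ'val hadj_uv
      have hfin : (applySeq p σ' u : ℤ) = balance D' p u := by
        rw [← hσ'eq]
        exact final_eq_balance G σ' p hσ'val u
      rw [hbal u, if_pos rfl, if_neg (fun h => hune h.symm)] at hfin
      have := h1 u
      omega


/-- Orderability Characterization: `D` is orderable under `p` iff every vertex has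
nonnegative balance and every nontrivial sink component of the component digraph
contains a vertex of balance at least one. -/
theorem orderability_characterization (G : SimpleGraph V) (D : Multiset (V × V)) (p : V → ℕ)
    (hG : ∀ e ∈ D, G.Adj e.1 e.2) :
    Orderable G D p ↔
      ((∀ v : V, 0 ≤ balance D p v) ∧
        ∀ a : V,
          (∀ e ∈ D, e.1 ∈ SCC D a → e.2 ∈ SCC D a) →   -- `SCC D a` is a sink component
          (∃ e ∈ D, e.1 ∈ SCC D a ∨ e.2 ∈ SCC D a) →    -- `SCC D a` is nontrivial
          ∃ v ∈ SCC D a, 1 ≤ balance D p v) := by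
  constructor
  · rintro ⟨σ, hσ, hval⟩
    subst hσ
    constructor
    · intro w
      rw [← final_eq_balance G σ p hval w]
      exact Int.ofNat_nonneg _
    · intro a hcl hnt
      have hmem : ∀ e : V × V, e ∈ σ → e ∈ (↑σ : Multiset (V × V)) := fun e he =>
        Multiset.mem_coe.mpr he
      have hex : ∃ e ∈ σ, e.2 ∈ SCC (↑σ) a := by
        obtain ⟨e, he, hor⟩ := hnt
        exact ⟨e, Multiset.mem_coe.mp he, hor.elim (fun h => hcl e he h) id⟩
      obtain ⟨w, hw, hone⟩ := exists_pos_final G (SCC (↑σ) a) σ p hval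
        (fun e he => hcl e (hmem e he)) hex
      refine ⟨w, hw, ?_⟩
      rw [← final_eq_balance G σ p hval w]
      exact_mod_cast hone
  · rintro ⟨h1, h2⟩
    exact reverse_dir G (Multiset.card D) D p rfl hG h1 h2
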